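/- Let I ⊆ ℝ be an open interval and φ : I → (0,∞) twice differentiable with φ' < 0 and φ'' > 0 on I. Suppose that for all x ∈ I, the quantity φ'(x)²/φ''(x) equals k·φ(x) for a constant k > 0. Then setting a = 1/k − 1 > −1, there exists b ∈ ℝ with a x + b > 0 on I and φ'(x)/φ(x) = −1/(a x + b) for all x ∈ I. -/

import Mathlib

/-- the ODE step: φ'²/φ'' = k·φ forces φ'/φ = −1/(ax+b) with a = 1/k − 1. -/
theorem ode_step (I : Set ℝ) (hIo : IsOpen I) (hIc : Convex ℝ I)
    (φ : ℝ → ℝ)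
    (hpos : ∀ x ∈ I, 0 < φ x)
    (hdiff : ∀ x ∈ I, DifferentiableAt ℝ φ x ∧ DifferentiableAt ℝ (deriv φ) x)
    (hd1 : ∀ x ∈ I, deriv φ x < 0)
    (hd2 : ∀ x ∈ I, 0 < deriv (deriv φ) x)
    (k : ℝ) (hk : 0 < k)
    (hode : ∀ x ∈ I, (deriv φ x)^2 / deriv (deriv φ) x = k * φ x) :
    ∃ b : ℝ, (∀ x ∈ I, 0 < (1/k - 1) * x + b) ∧
      ∀ x ∈ I, deriv φ x / φ x = -1 / ((1/k - 1) * x + b) := by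
  rcases Set.eq_empty_or_nonempty I with hI | ⟨x₀, hx₀⟩
  · exact ⟨1, by simp [hI], by simp [hI]⟩
  set a : ℝ := 1/k - 1 with ha
  set g : ℝ → ℝ := fun x => -φ x / deriv φ x with hg
  -- g has derivative a on I
  have hgd : ∀ x ∈ I, HasDerivAt g a x := by
    intro x hx
    have hφ' := (hd1 x hx).ne
    have hφ'' := (hd2 x hx).ne'
    have h1 : HasDerivAt (fun y => -φ y) (-(deriv φ x)) x :=
      ((hdiff x hx).1.hasDerivAt).neg
    have h2 : HasDerivAt (deriv φ) (deriv (deriv φ) x) x :=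
      (hdiff x hx).2.hasDerivAt
    have h3 := h1.div h2 hφ'
    refine h3.congr_deriv ?_
    have hk' : (deriv φ x)^2 = k * φ x * deriv (deriv φ) x := by
      have := hode x hx
      field_simp at this
      linarith
    have hφ'sq : (deriv φ x)^2 ≠ 0 := pow_ne_zero 2 hφ'
    rw [ha]
    field_simp
    nlinarith [hk']
  -- hence g x = a*x + (g x₀ - a*x₀) on I
  set b : ℝ := g x₀ - a * x₀ with hb
  have key : ∀ x ∈ I, g x = a * x + b := by
    intro x hx
    set h : ℝ → ℝ := fun y => g y - a * y with hh
    have hdh : ∀ y ∈ I, HasDerivAt h 0 y := by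
      intro y hy
      have := (hgd y hy).sub ((hasDerivAt_id y).const_mul a)
      exact this.congr_deriv (by ring)
    have hconst : h x = h x₀ := by
      apply hIc.is_const_of_fderivWithin_eq_zero (𝕜 := ℝ) (f := h) _ _ hx hx₀
      · intro y hy
        exact ((hdh y hy).differentiableAt).differentiableWithinAt
      · intro y hy
        rw [fderivWithin_of_isOpen hIo hy]
        have : deriv h y = 0 := (hdh y hy).deriv
        have hdiffh : DifferentiableAt ℝ h y := (hdh y hy).differentiableAt
        ext
        simp only [ContinuousLinearMap.zero_apply]
        rw [fderiv_apply_one_eq_deriv]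
        simp [this]
    simp only [hh] at hconst
    linarith
  refine ⟨b, ?_, ?_⟩
  · intro x hx
    have := key x hx
    have hgpos : 0 < g x := by
      simp only [hg]
      exact div_pos_of_neg_of_neg (by linarith [hpos x hx]) (hd1 x hx)
    linarith
  · intro x hx
    have hgx := key x hx
    have hφ' := (hd1 x hx).ne
    have hφ := (hpos x hx).ne'
    rw [← hgx]
    simp only [hg]
    field_simp
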